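/- For every integer k ≥ 1, if ρ^{k+1} ≤ ε < ρ^k, then the closed ε-neighborhood S_ε has exactly 1 + Σ_{j=1}^{k} ℓ^j connected components. -/

import Mathlib

open Metric Set Finset

/-- The partial sums `X_k = Σ_{i=1}^{k} 2·ℓ^i·ρ^i` (with `X_0 = 0`). -/
noncomputable def gapX (ρ : ℝ) (ℓ : ℕ) (k : ℕ) : ℝ :=
  ∑ i ∈ Finset.Icc 1 k, 2 * (ℓ : ℝ) ^ i * ρ ^ i

/-- The set of points on the real line whose consecutive gaps consist, for each
`k ≥ 1`, of `ℓ^k` gaps of length `2ρ^k`: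
`S = {X_{k−1} + 2·j·ρ^k : k ≥ 1, 0 ≤ j ≤ ℓ^k}`. -/
noncomputable def gapSet (ρ : ℝ) (ℓ : ℕ) : Set ℝ :=
  {x : ℝ | ∃ k : ℕ, ∃ j : ℕ, j ≤ ℓ ^ (k + 1) ∧
    x = gapX ρ ℓ k + 2 * (j : ℝ) * ρ ^ (k + 1)}

namespace GapAux

noncomputable def gc (ρ : ℝ) (ℓ : ℕ) (κ j : ℕ) : ℝ :=
  gapX ρ ℓ κ + 2 * (j : ℝ) * ρ ^ (κ + 1)

variable {ρ : ℝ} {ℓ : ℕ}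

lemma gapX_succ (ρ : ℝ) (ℓ : ℕ) (κ : ℕ) :
    gapX ρ ℓ (κ + 1) = gapX ρ ℓ κ + 2 * (ℓ : ℝ) ^ (κ + 1) * ρ ^ (κ + 1) := by
  unfold gapX
  rw [Finset.sum_Icc_succ_top (Nat.le_add_left 1 κ)]

lemma gapX_zero (ρ : ℝ) (ℓ : ℕ) : gapX ρ ℓ 0 = 0 := by simp [gapX]

lemma gapX_mono (hρ : 0 ≤ ρ) : Monotone (gapX ρ ℓ) := by
  intro m n hmn
  unfold gapX
  apply Finset.sum_le_sum_of_subset_of_nonneg (Finset.Icc_subset_Icc_right hmn)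
  intro i _ _
  positivity

lemma gapX_nonneg (hρ : 0 ≤ ρ) (κ : ℕ) : 0 ≤ gapX ρ ℓ κ := by
  have := gapX_mono (ℓ := ℓ) hρ (Nat.zero_le κ)
  rwa [gapX_zero] at this

lemma gc_mem {κ j : ℕ} (hj : j ≤ ℓ ^ (κ + 1)) : gc ρ ℓ κ j ∈ gapSet ρ ℓ :=
  ⟨κ, j, hj, rfl⟩

lemma gc_lb (hρ : 0 ≤ ρ) (κ j : ℕ) : gapX ρ ℓ κ ≤ gc ρ ℓ κ j := by
  have : 0 ≤ 2 * (j : ℝ) * ρ ^ (κ + 1) := by positivity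
  unfold gc; linarith

lemma gc_ub (hρ : 0 ≤ ρ) {κ j : ℕ} (hj : j ≤ ℓ ^ (κ + 1)) :
    gc ρ ℓ κ j ≤ gapX ρ ℓ (κ + 1) := by
  rw [gapX_succ]
  have hj' : (j : ℝ) ≤ (ℓ : ℝ) ^ (κ + 1) := by exact_mod_cast hj
  have h0 : (0:ℝ) ≤ ρ ^ (κ + 1) := by positivity
  unfold gc
  nlinarith

lemma gc_last (ρ : ℝ) (ℓ : ℕ) (κ : ℕ) : gc ρ ℓ κ (ℓ ^ (κ + 1)) = gapX ρ ℓ (κ + 1) := by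
  rw [gapX_succ]; unfold gc; push_cast; ring

lemma gc_succ (ρ : ℝ) (ℓ : ℕ) (κ j : ℕ) :
    gc ρ ℓ κ j + 2 * ρ ^ (κ + 1) = gc ρ ℓ κ (j + 1) := by
  unfold gc; push_cast; ring

lemma gapX_mem (hρ : 0 ≤ ρ) (hℓ : 1 ≤ ℓ) (κ : ℕ) : gapX ρ ℓ κ ∈ gapSet ρ ℓ := by
  cases κ with
  | zero =>
    refine ⟨0, 0, Nat.zero_le _, ?_⟩
    simp
  | succ n =>
    exact ⟨n, ℓ ^ (n + 1), le_rfl, (gc_last ρ ℓ n).symm⟩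

lemma mem_nonneg (hρ : 0 ≤ ρ) {p : ℝ} (hp : p ∈ gapSet ρ ℓ) : 0 ≤ p := by
  obtain ⟨κ, j, hj, rfl⟩ := hp
  exact le_trans (gapX_nonneg hρ κ) (gc_lb hρ κ j)

lemma gap_empty (hρ0 : 0 < ρ) {κ j : ℕ} (hj : j < ℓ ^ (κ + 1)) :
    ∀ p ∈ gapSet ρ ℓ, p ∉ Set.Ioo (gc ρ ℓ κ j) (gc ρ ℓ κ j + 2 * ρ ^ (κ + 1)) := by
  rintro p ⟨κ', j', hj', rfl⟩ ⟨h1, h2⟩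
  have h1' : gc ρ ℓ κ j < gc ρ ℓ κ' j' := h1
  have h2' : gc ρ ℓ κ' j' < gc ρ ℓ κ j + 2 * ρ ^ (κ + 1) := h2
  rcases lt_trichotomy κ' κ with h | heq | h
  · have ha : gc ρ ℓ κ' j' ≤ gapX ρ ℓ (κ' + 1) := gc_ub hρ0.le hj'
    have hb : gapX ρ ℓ (κ' + 1) ≤ gapX ρ ℓ κ := gapX_mono hρ0.le h
    have hc := gc_lb (ℓ := ℓ) hρ0.le κ j
    linarith
  · subst heq
    have hρκ : (0:ℝ) < ρ ^ (κ' + 1) := pow_pos hρ0 _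
    simp only [gc] at h1' h2'
    have hjj' : (j : ℝ) < j' := by nlinarith
    have hj'j : (j' : ℝ) < j + 1 := by nlinarith
    have l1 : j < j' := by exact_mod_cast hjj'
    have l2 : j' < j + 1 := by exact_mod_cast hj'j
    omega
  · have h3 := gc_succ ρ ℓ κ j
    have h4 : gc ρ ℓ κ (j + 1) ≤ gapX ρ ℓ (κ + 1) := gc_ub hρ0.le hj
    have h5 : gapX ρ ℓ (κ + 1) ≤ gapX ρ ℓ κ' := gapX_mono hρ0.le h
    have h6 := gc_lb (ℓ := ℓ) hρ0.le κ' j'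
    linarith

lemma exists_near {ε δ x : ℝ} (hε : 0 ≤ ε) (hδ : 0 < δ)
    (hx : x ∈ Metric.cthickening ε (gapSet ρ ℓ)) :
    ∃ p ∈ gapSet ρ ℓ, |x - p| < ε + δ := by
  rw [Metric.mem_cthickening_iff] at hx
  have h2 : EMetric.infEdist x (gapSet ρ ℓ) < ENNReal.ofReal (ε + δ) :=
    lt_of_le_of_lt hx ((ENNReal.ofReal_lt_ofReal_iff (by linarith)).2 (by linarith))
  obtain ⟨p, hp, hlt⟩ := EMetric.infEdist_lt_iff.mp h2
  exact ⟨p, hp, by rw [← Real.dist_eq]; exact edist_lt_ofReal.mp hlt⟩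

lemma cthick_gap {ε a b x : ℝ} (hε : 0 ≤ ε)
    (hS : ∀ p ∈ gapSet ρ ℓ, p ∉ Set.Ioo a b)
    (hx1 : a + ε < x) (hx2 : x < b - ε) :
    x ∉ Metric.cthickening ε (gapSet ρ ℓ) := by
  intro hx
  have hδ : 0 < min (x - (a + ε)) (b - ε - x) := lt_min (by linarith) (by linarith)
  obtain ⟨p, hp, hlt⟩ := exists_near hε hδ hx
  rw [abs_lt] at hlt
  have hm1 : min (x - (a + ε)) (b - ε - x) ≤ x - (a + ε) := min_le_left _ _
  have hm2 : min (x - (a + ε)) (b - ε - x) ≤ b - ε - x := min_le_right _ _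
  exact hS p hp ⟨by linarith [hlt.2], by linarith [hlt.1]⟩

lemma mem_T_of_near {ε p x : ℝ} (hp : p ∈ gapSet ρ ℓ) (h : |x - p| ≤ ε) :
    x ∈ Metric.cthickening ε (gapSet ρ ℓ) :=
  Metric.closedBall_subset_cthickening hp ε
    (by rw [Metric.mem_closedBall, Real.dist_eq]; exact h)

lemma mem_cthick_of_forall {ε z : ℝ} (hε : 0 ≤ ε)
    (h : ∀ δ > (0:ℝ), ∃ p ∈ gapSet ρ ℓ, |z - p| < ε + δ) :
    z ∈ Metric.cthickening ε (gapSet ρ ℓ) := by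
  rw [Metric.mem_cthickening_iff]
  by_contra hc
  push_neg at hc
  obtain ⟨r, hr0, hr1, hr2⟩ := ENNReal.lt_iff_exists_real_btwn.mp hc
  have hεr : ε < r := (ENNReal.ofReal_lt_ofReal_iff_of_nonneg hε).mp hr1
  obtain ⟨p, hp, hlt⟩ := h (r - ε) (by linarith)
  have : edist z p < ENNReal.ofReal r := by
    rw [edist_lt_ofReal, Real.dist_eq]
    calc |z - p| < ε + (r - ε) := hlt
    _ = r := by ring
  exact absurd (lt_of_le_of_lt (EMetric.infEdist_le_edist_of_mem hp) this) (not_lt.2 hr2.le)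

lemma cover_aux (N : ℕ) {d z : ℝ} (hd : 0 < d) (hz0 : 0 ≤ z) (hz1 : z ≤ 2 * N * d) :
    ∃ j ≤ N, |z - 2 * (j : ℝ) * d| ≤ d := by
  induction N with
  | zero =>
    refine ⟨0, le_rfl, ?_⟩
    have : z = 0 := le_antisymm (by simpa using hz1) hz0
    simp [this, hd.le]
  | succ N ih =>
    rcases le_or_gt z (2 * N * d) with h | h
    · obtain ⟨j, hj, hja⟩ := ih h
      exact ⟨j, hj.trans (Nat.le_succ N), hja⟩
    · rcases le_or_gt z ((2 * N + 1) * d) with h2 | h2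
      · refine ⟨N, Nat.le_succ N, ?_⟩
        rw [abs_le]
        constructor <;> nlinarith
      · refine ⟨N + 1, le_rfl, ?_⟩
        rw [abs_le]
        push_cast at hz1 ⊢
        constructor <;> nlinarith

lemma block_cover (hρ0 : 0 < ρ) {κ : ℕ} {z : ℝ}
    (h1 : gapX ρ ℓ κ ≤ z) (h2 : z ≤ gapX ρ ℓ (κ + 1)) :
    ∃ j ≤ ℓ ^ (κ + 1), |z - gc ρ ℓ κ j| ≤ ρ ^ (κ + 1) := by
  have hd : 0 < ρ ^ (κ + 1) := pow_pos hρ0 _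
  have h2' : z - gapX ρ ℓ κ ≤ 2 * (ℓ ^ (κ + 1) : ℕ) * ρ ^ (κ + 1) := by
    rw [gapX_succ] at h2
    push_cast
    linarith
  obtain ⟨j, hj, hja⟩ := cover_aux (ℓ ^ (κ + 1)) hd (by linarith) h2'
  refine ⟨j, hj, ?_⟩
  have he : z - gapX ρ ℓ κ - 2 * (j : ℝ) * ρ ^ (κ + 1) = z - gc ρ ℓ κ j := by
    unfold gc; ring
  rwa [he] at hja

lemma locate (hρ0 : 0 ≤ ρ) {k : ℕ} {z : ℝ} (hz : gapX ρ ℓ k ≤ z) (n : ℕ)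
    (hn : z ≤ gapX ρ ℓ n) :
    ∃ κ, k ≤ κ ∧ gapX ρ ℓ κ ≤ z ∧ z ≤ gapX ρ ℓ (κ + 1) := by
  induction n with
  | zero =>
    refine ⟨k, le_rfl, hz, ?_⟩
    rw [gapX_zero] at hn
    exact le_trans hn (gapX_nonneg hρ0 _)
  | succ n ih =>
    rcases le_or_gt z (gapX ρ ℓ n) with h | h
    · exact ih h
    · refine ⟨max n k, le_max_right _ _, ?_, hn.trans (gapX_mono hρ0 (by omega))⟩
      rcases max_cases n k with ⟨he, _⟩ | ⟨he, _⟩ <;> rw [he]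
      · exact h.le
      · exact hz

lemma left_gap (hρ0 : 0 < ρ) (hρ1 : ρ < 1) (hℓ : 1 ≤ ℓ) (κ : ℕ) {j : ℕ}
    (hj : j ≤ ℓ ^ (κ + 1)) :
    ∃ g : ℝ, 2 * ρ ^ (κ + 1) ≤ g ∧
      ∀ p ∈ gapSet ρ ℓ, p ∉ Set.Ioo (gc ρ ℓ κ j - g) (gc ρ ℓ κ j) := by
  match j, hj with
  | j + 1, hj =>
    refine ⟨2 * ρ ^ (κ + 1), le_rfl, ?_⟩
    have h := gap_empty hρ0 (show j < ℓ ^ (κ + 1) by omega)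
    have e1 : gc ρ ℓ κ (j + 1) - 2 * ρ ^ (κ + 1) = gc ρ ℓ κ j := by
      rw [← gc_succ]; ring
    have e2 : gc ρ ℓ κ j + 2 * ρ ^ (κ + 1) = gc ρ ℓ κ (j + 1) := gc_succ ρ ℓ κ j
    rw [e1]
    rw [← e2]
    exact h
  | 0, _ =>
    match κ with
    | 0 =>
      refine ⟨2, by rw [zero_add, pow_one]; linarith, ?_⟩
      intro p hp hmem
      have h0 : gc ρ ℓ 0 0 = 0 := by simp [gc, gapX_zero]
      rw [h0] at hmem
      exact absurd hmem.2 (not_lt.2 (mem_nonneg hρ0.le hp))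
    | κ + 1 =>
      refine ⟨2 * ρ ^ (κ + 1),
        by nlinarith [pow_le_pow_of_le_one hρ0.le hρ1.le (show κ + 1 ≤ κ + 1 + 1 by omega)], ?_⟩
      have hpos : 1 ≤ ℓ ^ (κ + 1) := Nat.one_le_pow _ _ (by omega)
      have h := gap_empty hρ0 (show ℓ ^ (κ + 1) - 1 < ℓ ^ (κ + 1) by omega)
      have hcast : ((ℓ ^ (κ + 1) - 1 : ℕ) : ℝ) = (ℓ : ℝ) ^ (κ + 1) - 1 := by
        push_cast [Nat.cast_sub hpos]
        ring
      have e2 : gc ρ ℓ κ (ℓ ^ (κ + 1) - 1) + 2 * ρ ^ (κ + 1) = gc ρ ℓ (κ + 1) 0 := by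
        simp only [gc, hcast, gapX_succ]
        push_cast
        ring
      have e1 : gc ρ ℓ (κ + 1) 0 - 2 * ρ ^ (κ + 1) = gc ρ ℓ κ (ℓ ^ (κ + 1) - 1) := by
        rw [← e2]; ring
      rw [e1, ← e2]
      exact h

lemma B_mem_of_between (hρ0 : 0 < ρ) (hρ1 : ρ < 1) (hℓ : 2 ≤ ℓ) {k : ℕ} {ε : ℝ}
    (hε1 : ρ ^ (k + 1) ≤ ε) {y z : ℝ}
    (hzlo : gapX ρ ℓ k - ε ≤ z)
    (hy : y ∈ Metric.cthickening ε (gapSet ρ ℓ)) (hzy : z ≤ y) :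
    z ∈ Metric.cthickening ε (gapSet ρ ℓ) := by
  have hε0 : 0 ≤ ε := le_trans (by positivity) hε1
  rcases le_or_gt z (gapX ρ ℓ k) with h | h
  · exact mem_T_of_near (gapX_mem hρ0.le (by omega) k)
      (abs_le.2 ⟨by linarith, by linarith⟩)
  · by_cases hbd : ∃ n, z ≤ gapX ρ ℓ n
    · obtain ⟨n, hn⟩ := hbd
      obtain ⟨κ, hκk, hκ1, hκ2⟩ := locate hρ0.le h.le n hn
      obtain ⟨j, hj, hja⟩ := block_cover hρ0 hκ1 hκ2
      exact mem_T_of_near (gc_mem hj)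
        (hja.trans (le_trans (pow_le_pow_of_le_one hρ0.le hρ1.le (by omega)) hε1))
    · push_neg at hbd
      apply mem_cthick_of_forall hε0
      intro δ hδ
      obtain ⟨p, hp, hlt⟩ := exists_near hε0 hδ hy
      refine ⟨p, hp, ?_⟩
      obtain ⟨κ', j', hj', rfl⟩ := hp
      have h1 : gapX ρ ℓ κ' + 2 * (j' : ℝ) * ρ ^ (κ' + 1) ≤ gapX ρ ℓ (κ' + 1) :=
        gc_ub hρ0.le hj'
      have h2 := hbd (κ' + 1)
      rw [abs_lt] at hlt ⊢
      exact ⟨by linarith, by linarith [hlt.2]⟩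

lemma compA (hρ0 : 0 < ρ) (hρ1 : ρ < 1) (hℓ : 2 ≤ ℓ) {k κ j : ℕ} {ε : ℝ}
    (hε1 : ρ ^ (k + 1) ≤ ε) (hε2 : ε < ρ ^ k)
    (hκ : κ < k) (hj : j < ℓ ^ (κ + 1)) :
    connectedComponentIn (Metric.cthickening ε (gapSet ρ ℓ)) (gc ρ ℓ κ j)
      = Set.Icc (gc ρ ℓ κ j - ε) (gc ρ ℓ κ j + ε) := by
  have hε0 : 0 ≤ ε := le_trans (by positivity) hε1
  have hεp : ε < ρ ^ (κ + 1) :=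
    lt_of_lt_of_le hε2 (pow_le_pow_of_le_one hρ0.le hρ1.le (by omega))
  have hρp : 0 < ρ ^ (κ + 1) := pow_pos hρ0 _
  set T := Metric.cthickening ε (gapSet ρ ℓ) with hT
  set c := gc ρ ℓ κ j with hc
  have hccT : Set.Icc (c - ε) (c + ε) ⊆ T := by
    rw [← Real.closedBall_eq_Icc]
    exact Metric.closedBall_subset_cthickening (gc_mem hj.le) ε
  have hcT : c ∈ T := Metric.self_subset_cthickening _ (gc_mem hj.le)
  apply Set.Subset.antisymm
  · intro y hy
    have hyT : y ∈ T := connectedComponentIn_subset _ _ hy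
    have hcc : c ∈ connectedComponentIn T c := mem_connectedComponentIn hcT
    have hord := (isPreconnected_connectedComponentIn (x := c) (F := T)).ordConnected
    constructor
    · by_contra hcon
      push_neg at hcon
      obtain ⟨g, hg, hgap⟩ := left_gap hρ0 hρ1 (by omega) κ hj.le
      have hzc := hord.out hy hcc
        ⟨le_max_left y (c - ρ ^ (κ + 1)), max_le (by linarith) (by linarith)⟩
      exact cthick_gap hε0 hgap
        (lt_of_lt_of_le (by linarith) (le_max_right y (c - ρ ^ (κ + 1))))
        (max_lt (by linarith) (by linarith))
        (connectedComponentIn_subset _ _ hzc)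
    · by_contra hcon
      push_neg at hcon
      have hgap := gap_empty hρ0 hj
      have hzc := hord.out hcc hy
        ⟨le_min (by linarith) (by linarith), min_le_left y (c + ρ ^ (κ + 1))⟩
      exact cthick_gap hε0 hgap
        (lt_min (by linarith) (by linarith))
        (lt_of_le_of_lt (min_le_right y (c + ρ ^ (κ + 1))) (by linarith))
        (connectedComponentIn_subset _ _ hzc)
  · exact isPreconnected_Icc.subset_connectedComponentIn ⟨by linarith, by linarith⟩ hccT

lemma compB (hρ0 : 0 < ρ) (hρ1 : ρ < 1) (hℓ : 2 ≤ ℓ) (m : ℕ) {ε : ℝ}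
    (hε1 : ρ ^ (m + 1 + 1) ≤ ε) (hε2 : ε < ρ ^ (m + 1)) :
    connectedComponentIn (Metric.cthickening ε (gapSet ρ ℓ)) (gapX ρ ℓ (m + 1))
      = Metric.cthickening ε (gapSet ρ ℓ) ∩ Set.Ici (gapX ρ ℓ (m + 1) - ε) := by
  have hε0 : 0 ≤ ε := le_trans (by positivity) hε1
  have hρp : 0 < ρ ^ (m + 1) := pow_pos hρ0 _
  set T := Metric.cthickening ε (gapSet ρ ℓ) with hT
  set X := gapX ρ ℓ (m + 1) with hX
  have hXT : X ∈ T := Metric.self_subset_cthickening _ (gapX_mem hρ0.le (by omega) (m + 1))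
  have hBsub : T ∩ Set.Ici (X - ε) ⊆ T := Set.inter_subset_left
  have hBord : Set.OrdConnected (T ∩ Set.Ici (X - ε)) := by
    constructor
    intro x hx y hy z hz
    exact ⟨B_mem_of_between hρ0 hρ1 hℓ hε1 (le_trans hx.2 hz.1) hy.1 hz.2,
      le_trans hx.2 hz.1⟩
  apply Set.Subset.antisymm
  · intro y hy
    refine ⟨connectedComponentIn_subset _ _ hy, ?_⟩
    by_contra hcon
    simp only [Set.mem_Ici, not_le] at hcon
    obtain ⟨g, hg, hgap⟩ := left_gap hρ0 hρ1 (by omega) m (le_refl (ℓ ^ (m + 1)))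
    rw [gc_last] at hgap
    have hXc : X ∈ connectedComponentIn T X := mem_connectedComponentIn hXT
    have hord := (isPreconnected_connectedComponentIn (x := X) (F := T)).ordConnected
    have hzc := hord.out hy hXc
      ⟨le_max_left y (X - ρ ^ (m + 1)), max_le (by linarith) (by linarith)⟩
    exact cthick_gap hε0 hgap
      (lt_of_lt_of_le (by linarith) (le_max_right y (X - ρ ^ (m + 1))))
      (max_lt (by linarith) (by linarith))
      (connectedComponentIn_subset _ _ hzc)
  · exact hBord.isPreconnected.subset_connectedComponentIn ⟨hXT, by simp [hε0]⟩ hBsub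

lemma classify (hρ0 : 0 < ρ) (hρ1 : ρ < 1) (hℓ : 2 ≤ ℓ) {k : ℕ} (hk : 1 ≤ k) {ε x : ℝ}
    (hε1 : ρ ^ (k + 1) ≤ ε)
    (hx : x ∈ Metric.cthickening ε (gapSet ρ ℓ)) (hxk : x < gapX ρ ℓ k - ε) :
    ∃ κ < k, ∃ j < ℓ ^ (κ + 1), |x - gc ρ ℓ κ j| ≤ ε := by
  have hε0 : 0 ≤ ε := le_trans (by positivity) hε1
  set S₁ : Set ℝ :=
    (fun pr : ℕ × ℕ => gc ρ ℓ pr.1 pr.2) '' {pr | pr.1 < k ∧ pr.2 < ℓ ^ (pr.1 + 1)} with hS₁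
  have hsub : gapSet ρ ℓ ⊆ S₁ ∪ (gapSet ρ ℓ ∩ Set.Ici (gapX ρ ℓ k)) := by
    rintro p ⟨κ', j', hj', rfl⟩
    rcases lt_or_ge κ' k with h | h
    · rcases lt_or_eq_of_le hj' with hlt | heq
      · exact Or.inl ⟨(κ', j'), ⟨h, hlt⟩, rfl⟩
      · subst heq
        rcases lt_or_eq_of_le (show κ' + 1 ≤ k by omega) with h2 | h2
        · refine Or.inl ⟨(κ' + 1, 0), ⟨h2, pow_pos (by omega) _⟩, ?_⟩
          show gc ρ ℓ (κ' + 1) 0 = gc ρ ℓ κ' (ℓ ^ (κ' + 1))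
          rw [gc_last]
          simp [gc]
        · refine Or.inr ⟨gc_mem le_rfl, ?_⟩
          show gc ρ ℓ κ' (ℓ ^ (κ' + 1)) ∈ Set.Ici (gapX ρ ℓ k)
          rw [gc_last, h2]
          exact Set.self_mem_Ici
    · exact Or.inr ⟨gc_mem hj', le_trans (gapX_mono hρ0.le h)
        (gc_lb hρ0.le κ' j')⟩
  have h2 : ENNReal.ofReal ε < EMetric.infEdist x (gapSet ρ ℓ ∩ Set.Ici (gapX ρ ℓ k)) := by
    refine lt_of_lt_of_le
      ((ENNReal.ofReal_lt_ofReal_iff_of_nonneg hε0).2 (show ε < gapX ρ ℓ k - x by linarith))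
      (EMetric.le_infEdist.2 ?_)
    rintro p ⟨hp, hpk⟩
    rw [edist_dist, Real.dist_eq]
    apply ENNReal.ofReal_le_ofReal
    rw [Set.mem_Ici] at hpk
    rw [abs_sub_comm, abs_of_nonneg (by linarith)]
    linarith
  have h3 : EMetric.infEdist x S₁ ≤ ENNReal.ofReal ε := by
    have h4 := EMetric.infEdist_anti (x := x) hsub
    rw [EMetric.infEdist_union] at h4
    have h5 : min (EMetric.infEdist x S₁)
        (EMetric.infEdist x (gapSet ρ ℓ ∩ Set.Ici (gapX ρ ℓ k))) ≤ ENNReal.ofReal ε :=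
      le_trans h4 (Metric.mem_cthickening_iff.mp hx)
    rcases min_le_iff.mp h5 with h6 | h6
    · exact h6
    · exact absurd h6 (not_le.2 h2)
  have hfin : S₁.Finite := by
    apply Set.Finite.image
    apply Set.Finite.subset ((Set.finite_Iio k).prod (Set.finite_Iio (ℓ ^ k)))
    rintro ⟨a, b⟩ ⟨ha, hb⟩
    exact ⟨ha, lt_of_lt_of_le hb (Nat.pow_le_pow_right (by omega) (by omega))⟩
  have hne : S₁.Nonempty := ⟨gc ρ ℓ 0 0, ⟨(0, 0), ⟨by omega, pow_pos (by omega) _⟩, rfl⟩⟩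
  obtain ⟨p, hp, hpe⟩ := hfin.isCompact.exists_infEdist_eq_edist hne x
  rw [show EMetric.infEdist x S₁ = edist x p from hpe] at h3
  have hd : dist x p ≤ ε := by rwa [edist_le_ofReal hε0] at h3
  obtain ⟨⟨κ, j⟩, ⟨hκ, hj⟩, rfl⟩ := hp
  exact ⟨κ, hκ, j, hj, by rwa [Real.dist_eq] at hd⟩

lemma gc_lt (hρ0 : 0 < ρ) {κ κ' j j' : ℕ} (hj : j < ℓ ^ (κ + 1)) (hκ : κ < κ') :
    gc ρ ℓ κ j < gc ρ ℓ κ' j' := by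
  have h1 := gc_succ ρ ℓ κ j
  have h2 : gc ρ ℓ κ (j + 1) ≤ gapX ρ ℓ (κ + 1) := gc_ub hρ0.le hj
  have h3 : gapX ρ ℓ (κ + 1) ≤ gapX ρ ℓ κ' := gapX_mono hρ0.le hκ
  have h4 := gc_lb (ℓ := ℓ) hρ0.le κ' j'
  have h5 : 0 < ρ ^ (κ + 1) := pow_pos hρ0 _
  linarith

end GapAux

open GapAux in
/-- For every integer `k ≥ 1`, if `ρ^{k+1} ≤ ε < ρ^k`, then the
closed `ε`-neighborhood `S_ε` has exactly `1 + Σ_{j=1}^{k} ℓ^j` connected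
components. -/
theorem gapSet_cthickening_component_count
    (ρ : ℝ) (hρ : ρ ∈ Set.Ioo (0 : ℝ) 1) (ℓ : ℕ) (hℓ : 2 ≤ ℓ)
    (k : ℕ) (hk : 1 ≤ k) (ε : ℝ) (hε1 : ρ ^ (k + 1) ≤ ε) (hε2 : ε < ρ ^ k) :
    {C : Set ℝ | ∃ p ∈ Metric.cthickening ε (gapSet ρ ℓ),
        C = connectedComponentIn (Metric.cthickening ε (gapSet ρ ℓ)) p}.ncard
      = 1 + ∑ j ∈ Finset.Icc 1 k, ℓ ^ j := by
  obtain ⟨hρ0, hρ1⟩ := hρ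
  have hε0 : 0 ≤ ε := le_trans (pow_nonneg hρ0.le _) hε1
  obtain ⟨m, rfl⟩ : ∃ m, k = m + 1 := ⟨k - 1, by omega⟩
  set T := Metric.cthickening ε (gapSet ρ ℓ) with hT
  set B := T ∩ Set.Ici (gapX ρ ℓ (m + 1) - ε) with hB
  set D : Set (ℕ × ℕ) := {pr | pr.1 < m + 1 ∧ pr.2 < ℓ ^ (pr.1 + 1)} with hD
  set f : ℕ × ℕ → Set ℝ :=
    fun pr => Set.Icc (gc ρ ℓ pr.1 pr.2 - ε) (gc ρ ℓ pr.1 pr.2 + ε) with hf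
  have hcompB := compB hρ0 hρ1 hℓ m hε1 hε2
  rw [← hT] at hcompB
  have hXT : gapX ρ ℓ (m + 1) ∈ T :=
    Metric.self_subset_cthickening _ (gapX_mem hρ0.le (by omega) (m + 1))
  have hset : {C : Set ℝ | ∃ p ∈ T, C = connectedComponentIn T p} = insert B (f '' D) := by
    ext C
    simp only [Set.mem_setOf_eq, Set.mem_insert_iff, Set.mem_image]
    constructor
    · rintro ⟨p, hp, rfl⟩
      rcases lt_or_ge p (gapX ρ ℓ (m + 1) - ε) with h | h
      · obtain ⟨κ, hκ, j, hj, hnear⟩ := classify hρ0 hρ1 hℓ (by omega) hε1 hp h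
        right
        refine ⟨(κ, j), ⟨hκ, hj⟩, ?_⟩
        have hcA := compA hρ0 hρ1 hℓ hε1 hε2 hκ hj
        rw [← hT] at hcA
        have hpc : p ∈ connectedComponentIn T (gc ρ ℓ κ j) := by
          rw [hcA]
          rw [abs_le] at hnear
          exact ⟨by linarith [hnear.1], by linarith [hnear.2]⟩
        rw [← connectedComponentIn_eq hpc, hcA]
      · left
        have hpB : p ∈ connectedComponentIn T (gapX ρ ℓ (m + 1)) := by
          rw [hcompB]; exact ⟨hp, h⟩
        rw [← connectedComponentIn_eq hpB, hcompB, hB]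
    · rintro (rfl | ⟨⟨κ, j⟩, ⟨hκ, hj⟩, rfl⟩)
      · exact ⟨gapX ρ ℓ (m + 1), hXT, by rw [hB, hcompB]⟩
      · refine ⟨gc ρ ℓ κ j, Metric.self_subset_cthickening _ (gc_mem hj.le), ?_⟩
        have hcA := compA hρ0 hρ1 hℓ hε1 hε2 hκ hj
        rw [← hT] at hcA
        rw [hcA]
  have hDfin : D.Finite := by
    apply Set.Finite.subset ((Set.finite_Iio (m + 1)).prod (Set.finite_Iio (ℓ ^ (m + 1))))
    rintro ⟨a, b⟩ ⟨ha, hb⟩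
    exact ⟨ha, lt_of_lt_of_le hb (Nat.pow_le_pow_right (by omega) (by omega))⟩
  have hBnot : B ∉ f '' D := by
    rintro ⟨⟨κ, j⟩, ⟨hκ, hj⟩, he⟩
    have hXB : gapX ρ ℓ (m + 1) ∈ B := ⟨hXT, by simp [hε0]⟩
    rw [← he] at hXB
    simp only [hf, Set.mem_Icc] at hXB
    have h1 := gc_succ ρ ℓ κ j
    have h2 : gc ρ ℓ κ (j + 1) ≤ gapX ρ ℓ (κ + 1) := gc_ub hρ0.le hj
    have h3 : gapX ρ ℓ (κ + 1) ≤ gapX ρ ℓ (m + 1) := gapX_mono hρ0.le (by omega)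
    have h4 : ε < ρ ^ (κ + 1) :=
      lt_of_lt_of_le hε2 (pow_le_pow_of_le_one hρ0.le hρ1.le (by omega))
    linarith [hXB.2]
  have hinj : Set.InjOn f D := by
    rintro ⟨κ, j⟩ ⟨hκ, hj⟩ ⟨κ', j'⟩ ⟨hκ', hj'⟩ he
    simp only [hf] at he
    have hεpos : 0 < ε := lt_of_lt_of_le (pow_pos hρ0 _) hε1
    have h1 : gc ρ ℓ κ j = gc ρ ℓ κ' j' := by
      have m1 : gc ρ ℓ κ j - ε ∈ Set.Icc (gc ρ ℓ κ' j' - ε) (gc ρ ℓ κ' j' + ε) := by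
        rw [← he]; exact ⟨le_rfl, by linarith⟩
      have m2 : gc ρ ℓ κ' j' - ε ∈ Set.Icc (gc ρ ℓ κ j - ε) (gc ρ ℓ κ j + ε) := by
        rw [he]; exact ⟨le_rfl, by linarith⟩
      have l1 := m1.1
      have l2 := m2.1
      linarith
    rcases lt_trichotomy κ κ' with h | h | h
    · exact absurd h1 (ne_of_lt (gc_lt hρ0 hj h))
    · subst h
      have h3 : 2 * (j : ℝ) * ρ ^ (κ + 1) = 2 * (j' : ℝ) * ρ ^ (κ + 1) := by
        simp only [gc] at h1
        linarith
      have h4 : 2 * (j : ℝ) = 2 * (j' : ℝ) :=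
        mul_right_cancel₀ (pow_ne_zero _ hρ0.ne') h3
      have : j = j' := by exact_mod_cast (by linarith : (j : ℝ) = j')
      simp [this]
    · exact absurd h1.symm (ne_of_lt (gc_lt hρ0 hj' h))
  rw [hset, Set.ncard_insert_of_notMem hBnot (hDfin.image f),
    Set.ncard_image_of_injOn hinj]
  have hDcard : D.ncard = ∑ κ ∈ Finset.range (m + 1), ℓ ^ (κ + 1) := by
    have hDeq : D = ↑((Finset.range (m + 1)).biUnion
        fun κ => {κ} ×ˢ Finset.range (ℓ ^ (κ + 1))) := by
      ext ⟨a, b⟩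
      simp only [hD, Set.mem_setOf_eq, Finset.coe_biUnion, Finset.coe_sort_coe,
        Set.mem_iUnion, Finset.mem_coe, Finset.mem_product, Finset.mem_singleton,
        Finset.mem_range, exists_prop]
      constructor
      · rintro ⟨ha, hb⟩
        exact ⟨a, ha, rfl, hb⟩
      · rintro ⟨i, hi, rfl, hb⟩
        exact ⟨hi, hb⟩
    rw [hDeq, Set.ncard_coe_finset]
    rw [Finset.card_biUnion]
    · apply Finset.sum_congr rfl
      intro κ _
      simp
    · intro i _ j _ hij
      simp only [Finset.disjoint_left]
      rintro ⟨a, b⟩ ha hb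
      simp only [Finset.mem_product, Finset.mem_singleton] at ha hb
      exact hij (ha.1 ▸ hb.1 ▸ rfl)
  rw [hDcard]
  have hsum : ∑ j ∈ Finset.Icc 1 (m + 1), ℓ ^ j
      = ∑ κ ∈ Finset.range (m + 1), ℓ ^ (κ + 1) := by
    rw [← Finset.Ico_add_one_right_eq_Icc, Finset.sum_Ico_eq_sum_range]
    apply Finset.sum_congr (by norm_num)
    intro i _
    rw [add_comm]
  rw [hsum]
  omega
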